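/- Let D be a digraph and let (R_i)_{i∈I} be a countable family of pairwise disjoint out-rays in D such that any two of them are equivalent (i.e., for any two rays in the family there are infinitely many pairwise disjoint directed paths from each to the other). Then there exists a single out-ray S in D that intersects every ray R_i in infinitely many vertices. -/

import Mathlib

variable {V : Type*}

/-- An out-ray: a one-way infinite directed path oriented away from its start. -/
def IsOutRay (D : Digraph V) (f : ℕ → V) : Prop :=
  Function.Injective f ∧ ∀ n, D.Adj (f n) (f (n + 1))

/-- An in-ray: a one-way infinite directed path oriented towards its start. -/
def IsInRay (D : Digraph V) (f : ℕ → V) : Prop :=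
  Function.Injective f ∧ ∀ n, D.Adj (f (n + 1)) (f n)

/-- A finite directed path, given as a nonempty duplicate-free list of vertices. -/
def IsDipath (D : Digraph V) (p : List V) : Prop :=
  p ≠ [] ∧ p.Nodup ∧ p.Chain' D.Adj

def StartsIn (p : List V) (A : Set V) : Prop := ∃ a ∈ A, p.head? = some a

def EndsIn (p : List V) (B : Set V) : Prop := ∃ b ∈ B, p.getLast? = some b

def ListsDisjoint (p q : List V) : Prop := ∀ v ∈ p, v ∉ q

/-- There are infinitely many pairwise disjoint directed A–B paths. -/
def ManyDisjointPaths (D : Digraph V) (A B : Set V) : Prop :=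
  ∃ P : ℕ → List V,
    (∀ n, IsDipath D (P n) ∧ StartsIn (P n) A ∧ EndsIn (P n) B) ∧
    ∀ m n, m ≠ n → ListsDisjoint (P m) (P n)

/-- Two rays are equivalent: infinitely many disjoint paths in both directions. -/
def EquivRays (D : Digraph V) (R₁ R₂ : ℕ → V) : Prop :=
  ManyDisjointPaths D (Set.range R₁) (Set.range R₂) ∧
  ManyDisjointPaths D (Set.range R₂) (Set.range R₁)


section Aux

open List

private lemma aux_getElem_congr {l : List V} {j1 j2 : ℕ} (h : j1 = j2) (h1 : j1 < l.length) :
    l[j1]'h1 = l[j2]'(h ▸ h1) := by subst h; rfl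

private lemma exists_path_avoiding {D : Digraph V} {A B : Set V}
    (h : ManyDisjointPaths D A B) {F : Set V} (hF : F.Finite) :
    ∃ p, IsDipath D p ∧ StartsIn p A ∧ EndsIn p B ∧ ∀ v ∈ p, v ∉ F := by
  obtain ⟨P, hP, hd⟩ := h
  by_contra hcon
  push_neg at hcon
  have hx : ∀ n, ∃ v ∈ P n, v ∈ F := by
    intro n
    obtain ⟨h1, h2, h3⟩ := hP n
    exact hcon (P n) h1 h2 h3
  choose f hf1 hf2 using hx
  have hinj : Function.Injective f := by
    intro m n hmn
    by_contra hne
    exact hd m n hne (f m) (hf1 m) (hmn ▸ hf1 n)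
  exact (Set.infinite_range_of_injective hinj) (hF.subset (Set.range_subset_iff.mpr hf2))

private lemma exists_index_bound {g : ℕ → V} (hg : Function.Injective g) (l : List V) :
    ∃ M, ∀ m, g m ∈ l → m ≤ M := by
  have hfin : {m | g m ∈ l}.Finite := by
    have heq : {m | g m ∈ l} = g ⁻¹' {v | v ∈ l} := rfl
    rw [heq]
    exact Set.Finite.preimage hg.injOn l.finite_toSet
  obtain ⟨M, hM⟩ := hfin.bddAbove
  exact ⟨M, fun m hm => hM hm⟩

private lemma trim_path {D : Digraph V} {p : List V} (hp : IsDipath D p) {A B : Set V}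
    (hAB : ∀ v, v ∈ A → v ∉ B) (hA : StartsIn p A) (hB : EndsIn p B) :
    ∃ (q : List V) (hq : q ≠ []),
      1 < q.length ∧ q.Nodup ∧ q.Chain' D.Adj ∧ (∀ v ∈ q, v ∈ p) ∧
      q.head hq ∈ A ∧ q.getLast hq ∈ B ∧
      (∀ v ∈ q.tail, v ∉ A) ∧ (∀ v ∈ q.dropLast, v ∉ B) := by
  classical
  obtain ⟨hne, hnd, hch⟩ := hp
  have hn : 0 < p.length := List.length_pos_iff.mpr hne
  obtain ⟨a0, ha0, hh⟩ := hA
  obtain ⟨b0, hb0, hl⟩ := hB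
  have hhead : p[0]'hn ∈ A := by
    rw [List.head?_eq_head hne] at hh
    rw [← List.head_eq_getElem hne]
    rw [Option.some_injective _ hh]
    exact ha0
  have hlast : p[p.length - 1]'(by omega) ∈ B := by
    rw [List.getLast?_eq_getLast hne] at hl
    rw [← List.getLast_eq_getElem hne]
    rw [Option.some_injective _ hl]
    exact hb0
  set PA : ℕ → Prop := fun j => ∃ h : j < p.length, p[j]'h ∈ A with hPA
  set a := Nat.findGreatest PA (p.length - 1) with ha
  have hPa : PA a := Nat.findGreatest_spec (Nat.zero_le _) ⟨hn, hhead⟩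
  have haLe : a ≤ p.length - 1 := Nat.findGreatest_le _
  have hamax : ∀ j, a < j → (h : j < p.length) → p[j]'h ∉ A := by
    intro j h1 h2 hmem
    exact Nat.findGreatest_is_greatest h1 (by omega) ⟨h2, hmem⟩
  have han : a < p.length - 1 := by
    by_contra hcon
    have heq : a = p.length - 1 := by omega
    obtain ⟨hw, hmem⟩ := hPa
    rw [aux_getElem_congr heq hw] at hmem
    exact hAB _ hmem hlast
  have hbex : ∃ j, a < j ∧ ∃ h : j < p.length, p[j]'h ∈ B :=
    ⟨p.length - 1, han, by omega, hlast⟩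
  set b := Nat.find hbex with hbdef
  obtain ⟨hab, hbn, hbB⟩ : a < b ∧ ∃ h : b < p.length, p[b]'h ∈ B := Nat.find_spec hbex
  have hble : b ≤ p.length - 1 := Nat.find_min' hbex ⟨han, by omega, hlast⟩
  have hbmin : ∀ j, a < j → j < b → (h : j < p.length) → p[j]'h ∉ B := by
    intro j h1 h2 h3 hmem
    exact Nat.find_min hbex h2 ⟨h1, h3, hmem⟩
  set q : List V := (p.drop a).take (b - a + 1) with hqdef
  have hqlen : q.length = b - a + 1 := by
    rw [hqdef, List.length_take, List.length_drop]
    omega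
  have hqget : ∀ (t : ℕ) (h : t < q.length), q[t]'h = p[a + t]'(by rw [hqlen] at h; omega) := by
    intro t h
    show ((p.drop a).take (b - a + 1))[t]'h = _
    rw [List.getElem_take, List.getElem_drop]
  have hqne : q ≠ [] := by
    intro h
    rw [h] at hqlen
    simp at hqlen
  have hq1 : 1 < q.length := by omega
  have hqinfix : q <:+: p := ((List.take_prefix _ _).isInfix).trans ((List.drop_suffix _ _).isInfix)
  refine ⟨q, hqne, hq1, hqinfix.sublist.nodup hnd, hch.infix hqinfix, fun v hv => hqinfix.subset hv,
    ?_, ?_, ?_, ?_⟩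
  · rw [List.head_eq_getElem hqne, hqget 0 (by omega)]
    rw [aux_getElem_congr (by omega : a + 0 = a)]
    exact hPa.2
  · rw [List.getLast_eq_getElem hqne, hqget (q.length - 1) (by omega)]
    rw [aux_getElem_congr (by omega : a + (q.length - 1) = b)]
    exact hbB
  · intro v hv
    obtain ⟨t, ht, rfl⟩ := List.mem_iff_getElem.mp hv
    rw [List.getElem_tail]
    rw [hqget (t + 1) (by rw [List.length_tail] at ht; omega)]
    exact hamax (a + (t + 1)) (by omega) _
  · intro v hv
    obtain ⟨t, ht, rfl⟩ := List.mem_iff_getElem.mp hv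
    have ht' : t < q.length - 1 := by
      rw [List.length_dropLast] at ht; omega
    rw [List.getElem_dropLast]
    rw [hqget t (by omega)]
    rcases Nat.eq_zero_or_pos t with h0 | h0
    · subst h0
      rw [aux_getElem_congr (by omega : a + 0 = a)]
      exact fun hmem => hAB _ hPa.2 hmem
    · exact hbmin (a + t) (by omega) (by omega) _

structure RayState {I : Type*} (D : Digraph V) (R : I → ℕ → V) where
  L : List V
  i : I
  c : ℕ
  hne : L ≠ []
  nodup : L.Nodup
  chain : L.Chain' D.Adj
  last_eq : L.getLast hne = R i c
  bound : ∀ m, R i m ∈ L → m ≤ c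

private lemma step_lemma {I : Type*} {D : Digraph V} {R : I → ℕ → V}
    (hray : ∀ i, IsOutRay D (R i))
    (hdisj : ∀ i j, i ≠ j → ∀ n m, R i n ≠ R j m)
    (hequiv : ∀ i j, i ≠ j → EquivRays D (R i) (R j))
    (s : RayState D R) (k : I) :
    ∃ t : RayState D R, t.i = k ∧ s.L <+: t.L ∧ s.L.length < t.L.length := by
  classical
  by_cases hk : k = s.i
  · -- easy case: extend along the current ray by one vertex
    have hnotmem : R s.i (s.c + 1) ∉ s.L := by
      intro hmem
      have := s.bound _ hmem
      omega
    refine ⟨⟨s.L ++ [R s.i (s.c + 1)], s.i, s.c + 1, by simp [s.hne], ?_, ?_, ?_, ?_⟩,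
      hk.symm, List.prefix_append _ _, by simp⟩
    · rw [List.nodup_append']
      refine ⟨s.nodup, List.nodup_singleton _, ?_⟩
      intro v hv hv'
      simp only [List.mem_singleton] at hv'
      exact hnotmem (hv' ▸ hv)
    · show List.IsChain _ _
      show List.IsChain _ _
      rw [List.isChain_append]
      refine ⟨s.chain, List.isChain_singleton _, ?_⟩
      intro x hx y hy
      rw [List.getLast?_eq_getLast s.hne, Option.mem_def, Option.some_inj] at hx
      simp only [List.head?_cons, Option.mem_def, Option.some_inj] at hy
      subst hy
      rw [← hx, s.last_eq]
      exact (hray s.i).2 s.c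
    · exact (List.getLast_append_of_ne_nil _ (by simp)).trans (by simp)
    · intro m hm
      rcases List.mem_append.mp hm with h | h
      · have := s.bound _ h; omega
      · simp only [List.mem_singleton] at h
        have := (hray s.i).1 h
        omega
  · -- main case: route to the other ray
    obtain ⟨M, hM⟩ := exists_index_bound (hray k).1 s.L
    set F : Set V := ({v | v ∈ s.L} ∪ R s.i '' Set.Iic s.c) ∪ R k '' Set.Iic M with hF
    have hFfin : F.Finite :=
      ((s.L.finite_toSet.union ((Set.finite_Iic s.c).image _))).union ((Set.finite_Iic M).image _)
    obtain ⟨p, hp, hpA, hpB, hpF⟩ :=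
      exists_path_avoiding (hequiv s.i k (Ne.symm hk)).1 hFfin
    have hpL : ∀ v ∈ p, v ∉ s.L := fun v hv h => hpF v hv (Or.inl (Or.inl h))
    have hpI : ∀ m, m ≤ s.c → R s.i m ∉ p := fun m hm hmem =>
      hpF _ hmem (Or.inl (Or.inr ⟨m, hm, rfl⟩))
    have hpK : ∀ m, m ≤ M → R k m ∉ p := fun m hm hmem =>
      hpF _ hmem (Or.inr ⟨m, hm, rfl⟩)
    have hAB : ∀ v, v ∈ Set.range (R s.i) → v ∉ Set.range (R k) := by
      rintro v ⟨n, rfl⟩ ⟨m, hm⟩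
      exact hdisj k s.i hk m n hm
    obtain ⟨q, hqne, hq1, hqnd, hqch, hqsub, hqhd, hqlast, hqtl, hqdl⟩ :=
      trim_path hp hAB hpA hpB
    obtain ⟨sx, hsx⟩ := hqhd
    obtain ⟨ex, hex⟩ := hqlast
    have hsc : s.c < sx := by
      by_contra hcon
      exact hpI sx (by omega) (hsx ▸ hqsub _ (List.head_mem hqne))
    have heM : M < ex := by
      by_contra hcon
      exact hpK ex (by omega) (hex ▸ hqsub _ (List.getLast_mem hqne))
    set seg : List V := (List.range (sx - s.c)).map (fun t => R s.i (s.c + 1 + t)) with hseg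
    have hseglen : seg.length = sx - s.c := by simp [hseg]
    have hsegne : seg ≠ [] := by
      intro h
      rw [h] at hseglen
      simp at hseglen
      omega
    have hsegget : ∀ (t : ℕ) (h : t < seg.length), seg[t]'h = R s.i (s.c + 1 + t) := by
      intro t h
      show ((List.range (sx - s.c)).map (fun t => R s.i (s.c + 1 + t)))[t]'h = _
      simp
    have hsegmem : ∀ v ∈ seg, ∃ m, s.c < m ∧ m ≤ sx ∧ v = R s.i m := by
      intro v hv
      rw [hseg] at hv
      simp only [List.mem_map, List.mem_range] at hv
      obtain ⟨t, ht, rfl⟩ := hv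
      exact ⟨s.c + 1 + t, by omega, by omega, rfl⟩
    have hsegnd : seg.Nodup := by
      refine List.Nodup.map ?_ List.nodup_range
      intro t₁ t₂ h
      have := (hray s.i).1 h
      omega
    have hqtne : q.tail ≠ [] := by
      intro h
      have := q.length_tail
      rw [h] at this
      simp at this
      omega
    have hsegch : seg.Chain' D.Adj := by
      show List.IsChain _ _
      rw [List.isChain_iff_getElem]
      intro t ht
      rw [hsegget t (by omega), hsegget (t + 1) (by omega)]
      have harith : s.c + 1 + (t + 1) = (s.c + 1 + t) + 1 := by omega
      rw [harith]
      exact (hray s.i).2 _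
    have hseglast : seg.getLast hsegne = R s.i sx := by
      rw [List.getLast_eq_getElem, hsegget _ (by omega)]
      congr 1
      omega
    have hq0 : q[0]'(by omega) = R s.i sx := by
      rw [← List.head_eq_getElem hqne]
      exact hsx.symm
    have hqthd : q.tail.head hqtne = q[1]'(by omega) := by
      rw [List.head_eq_getElem, List.getElem_tail]
    have hq01 : D.Adj (q[0]'(by omega)) (q[1]'(by omega)) := by
      have := List.isChain_iff_getElem.mp hqch 0 (by omega)
      simpa using this
    have hqtlast : q.tail.getLast hqtne = q.getLast hqne := by
      rw [List.getLast_eq_getElem hqtne, List.getLast_eq_getElem hqne, List.getElem_tail]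
      exact aux_getElem_congr (by have := q.length_tail; omega) _
    have hsegqtdisj : seg.Disjoint q.tail := by
      intro v hv hv'
      obtain ⟨m, _, _, rfl⟩ := hsegmem _ hv
      exact hqtl _ hv' ⟨m, rfl⟩
    have hLdisj : s.L.Disjoint (seg ++ q.tail) := by
      intro v hv hv'
      rcases List.mem_append.mp hv' with h | h
      · obtain ⟨m, hm1, _, rfl⟩ := hsegmem _ h
        have := s.bound _ hv
        omega
      · exact hpL v (hqsub _ (List.mem_of_mem_tail h)) hv
    have hchain2 : (seg ++ q.tail).Chain' D.Adj := by
      show List.IsChain _ _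
      rw [List.isChain_append]
      refine ⟨hsegch, hqch.tail, ?_⟩
      intro x hx y hy
      rw [List.getLast?_eq_getLast hsegne, Option.mem_def, Option.some_inj] at hx
      rw [List.head?_eq_head hqtne, Option.mem_def, Option.some_inj] at hy
      rw [← hx, ← hy, hseglast, hqthd, ← hq0]
      exact hq01
    refine ⟨⟨s.L ++ (seg ++ q.tail), k, ex, by simp [s.hne], ?_, ?_, ?_, ?_⟩,
      rfl, List.prefix_append _ _, ?_⟩
    · rw [List.nodup_append']
      refine ⟨s.nodup, ?_, hLdisj⟩
      rw [List.nodup_append']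
      exact ⟨hsegnd, (List.tail_sublist q).nodup hqnd, hsegqtdisj⟩
    · show List.IsChain _ _
      show List.IsChain _ _
      rw [List.isChain_append]
      refine ⟨s.chain, hchain2, ?_⟩
      intro x hx y hy
      rw [List.getLast?_eq_getLast s.hne, Option.mem_def, Option.some_inj] at hx
      have hhd : (seg ++ q.tail).head? = some (seg.head hsegne) := by
        rw [List.head?_append, List.head?_eq_head hsegne]
        rfl
      rw [hhd, Option.mem_def, Option.some_inj] at hy
      have hseghd : seg.head hsegne = R s.i (s.c + 1) := by
        rw [List.head_eq_getElem, hsegget 0 (by omega)]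
      rw [← hx, ← hy, hseghd, s.last_eq]
      exact (hray s.i).2 s.c
    · have h1 : (s.L ++ (seg ++ q.tail)).getLast (by simp [s.hne]) =
          (seg ++ q.tail).getLast (by simp [hsegne]) := List.getLast_append_of_ne_nil _ (by simp [hsegne])
      have h2 : (seg ++ q.tail).getLast (by simp [hsegne]) = q.tail.getLast hqtne :=
        List.getLast_append_of_ne_nil _ hqtne
      rw [h1, h2, hqtlast, ← hex]
    · intro m hm
      rcases List.mem_append.mp hm with h | h
      · have := hM m h; omega
      · rcases List.mem_append.mp h with h' | h'
        · obtain ⟨m', _, _, heq⟩ := hsegmem _ h'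
          exact absurd heq (hdisj k s.i hk m m')
        · have hq' : R k m ∈ q := List.mem_of_mem_tail h'
          rw [← List.dropLast_concat_getLast hqne] at hq'
          rcases List.mem_append.mp hq' with h'' | h''
          · exact absurd ⟨m, rfl⟩ (hqdl _ h'')
          · simp only [List.mem_singleton] at h''
            have : m = ex := (hray k).1 (by rw [h'', ← hex])
            omega
    · have : 0 < seg.length := List.length_pos_iff.mpr hsegne
      simp only [List.length_append]
      omega

end Aux

/-- Proposition 2.1: for a countable family of disjoint equivalent out-rays there is an
out-ray meeting every member of the family infinitely often. -/
theorem stmt0 {I : Type*} [Countable I] [Nonempty I] (D : Digraph V) (R : I → ℕ → V)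
    (hray : ∀ i, IsOutRay D (R i))
    (hdisj : ∀ i j, i ≠ j → ∀ n m, R i n ≠ R j m)
    (hequiv : ∀ i j, i ≠ j → EquivRays D (R i) (R j)) :
    ∃ S : ℕ → V, IsOutRay D S ∧ ∀ i, {n : ℕ | S n ∈ Set.range (R i)}.Infinite := by
  classical
  obtain ⟨e0, he0⟩ := exists_surjective_nat I
  set σ : ℕ → I := fun n => e0 (Nat.unpair n).1 with hσ
  have hσinf : ∀ i : I, {k | σ k = i}.Infinite := by
    intro i
    obtain ⟨m, hm⟩ := he0 i
    apply Set.infinite_of_injective_forall_mem (f := fun j : ℕ => Nat.pair m j)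
    · intro a b hab
      have := congrArg (fun x => (Nat.unpair x).2) hab
      simpa [Nat.unpair_pair] using this
    · intro j
      simp only [Set.mem_setOf_eq, hσ, Nat.unpair_pair]
      exact hm
  obtain ⟨i₀⟩ := ‹Nonempty I›
  have hbound0 : ∀ m, R i₀ m ∈ [R i₀ 0] → m ≤ 0 := by
    intro m hm
    simp only [List.mem_singleton] at hm
    exact le_of_eq ((hray i₀).1 hm)
  choose next hnext1 hnext2 hnext3 using step_lemma hray hdisj hequiv
  set s₀ : RayState D R :=
    ⟨[R i₀ 0], i₀, 0, by simp, List.nodup_singleton _, List.isChain_singleton _, by simp, hbound0⟩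
    with hs₀
  set st : ℕ → RayState D R := fun n => Nat.rec s₀ (fun k s => next s (σ k)) n with hst
  have hstsucc : ∀ k, st (k + 1) = next (st k) (σ k) := fun k => rfl
  have hpref1 : ∀ k, (st k).L <+: (st (k + 1)).L := by
    intro k
    rw [hstsucc k]
    exact hnext2 _ _
  have hpref : ∀ k l, k ≤ l → (st k).L <+: (st l).L := by
    intro k l hkl
    induction l, hkl using Nat.le_induction with
    | base => exact List.prefix_refl _
    | succ n hn ih => exact ih.trans (hpref1 n)
  have hlt : ∀ k, (st k).L.length < (st (k + 1)).L.length := by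
    intro k
    rw [hstsucc k]
    exact hnext3 _ _
  have hlen : ∀ k, k + 1 ≤ (st k).L.length := by
    intro k
    induction k with
    | zero => simp [hst, hs₀]
    | succ n ih => have := hlt n; omega
  have hSlt : ∀ n, n < ((st (n + 1)).L).length := fun n => by have := hlen (n + 1); omega
  set S : ℕ → V := fun n => ((st (n + 1)).L)[n]'(hSlt n) with hS
  have hSeq : ∀ (n k : ℕ) (h : n < ((st k).L).length), n + 1 ≤ k →
      S n = ((st k).L)[n]'h := by
    intro n k h hk
    exact (hpref (n + 1) k hk).getElem (hSlt n)
  have hinj : Function.Injective S := by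
    intro n m hnm
    rcases le_total n m with h | h
    · have h1 := hSeq n (m + 1) (by have := hSlt m; omega) (by omega)
      have h2 := hSeq m (m + 1) (hSlt m) le_rfl
      rw [h1, h2] at hnm
      exact ((st (m + 1)).nodup.getElem_inj_iff).mp hnm
    · have h1 := hSeq n (n + 1) (hSlt n) le_rfl
      have h2 := hSeq m (n + 1) (by have := hSlt n; omega) (by omega)
      rw [h1, h2] at hnm
      exact ((st (n + 1)).nodup.getElem_inj_iff).mp hnm
  refine ⟨S, ⟨hinj, ?_⟩, ?_⟩
  · intro n
    have h1 := hSeq n (n + 1 + 1) (by have := hSlt (n + 1); omega) (by omega)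
    have h2 := hSeq (n + 1) (n + 1 + 1) (hSlt (n + 1)) le_rfl
    rw [h1, h2]
    have := List.isChain_iff_getElem.mp (st (n + 1 + 1)).chain n (by have := hSlt (n + 1); omega)
    simpa using this
  · intro i
    have hlastmem : ∀ k, ((st (k + 1)).L).getLast ((st (k + 1)).hne) ∈ Set.range (R (σ k)) := by
      intro k
      have h1 := (st (k + 1)).last_eq
      have h2 : (st (k + 1)).i = σ k := by rw [hstsucc k]; exact hnext1 _ _
      rw [h2] at h1
      exact ⟨_, h1.symm⟩
    have hgk : ∀ k, k + 1 ≤ (st (k + 1)).L.length - 1 := by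
      intro k
      have := hlen (k + 1)
      omega
    have hmem : ∀ k, σ k = i → S ((st (k + 1)).L.length - 1) ∈ Set.range (R i) := by
      intro k hk
      have hlk : (st (k + 1)).L.length - 1 < ((st (k + 1)).L).length := by
        have := hlen (k + 1); omega
      have hkn : k + 1 ≤ (st (k + 1)).L.length - 1 + 1 := by have := hgk k; omega
      have h2 : S ((st (k + 1)).L.length - 1) = ((st (k + 1)).L)[(st (k + 1)).L.length - 1]'hlk :=
        ((hpref (k + 1) ((st (k + 1)).L.length - 1 + 1) hkn).getElem hlk).symm
      rw [h2, ← List.getLast_eq_getElem ((st (k + 1)).hne), ← hk]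
      exact hlastmem k
    have hgmono : StrictMono (fun k => (st (k + 1)).L.length - 1) := by
      apply strictMono_nat_of_lt_succ
      intro k
      have h1 := hlt (k + 1)
      have h2 := hlen (k + 1)
      omega
    have hsub : (fun k => (st (k + 1)).L.length - 1) '' {k | σ k = i} ⊆
        {n | S n ∈ Set.range (R i)} := by
      rintro _ ⟨k, hk, rfl⟩
      exact hmem k hk
    exact Set.Infinite.mono hsub (Set.Infinite.image hgmono.injective.injOn (hσinf i))
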